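/- Let γ be a positive integer and t = 9(2γ−1)(γ+1). Then the graph P''_t is not 3-choosable with clustering at most γ: there exists an assignment L of lists of size 3 to the vertices of P''_t such that every L-coloring of P''_t has a connected monochromatic subgraph with more than γ vertices. -/

import Mathlib

/-- The graph `P''_t`: the complete join of two adjacent vertices with a path on `t` vertices. -/
def pathJoin2 (t : ℕ) : SimpleGraph (Fin t ⊕ Fin 2) :=
  SimpleGraph.fromRel (fun a b => match a, b with
    | Sum.inl i, Sum.inl j => (i : ℕ) + 1 = (j : ℕ)
    | Sum.inl _, Sum.inr _ => True
    | Sum.inr _, Sum.inl _ => False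
    | Sum.inr i, Sum.inr j => i ≠ j)

def natFin (t : ℕ) (ht : 0 < t) (k : ℕ) : Fin t := ⟨k % t, Nat.mod_lt _ ht⟩

def Lfun (t M : ℕ) : (Fin t ⊕ Fin 2) → Finset ℕ
  | Sum.inl k => {(k : ℕ) / M / 3 + 1, (k : ℕ) / M % 3 + 4, 7}
  | Sum.inr r => if r = 0 then {1, 2, 3} else {4, 5, 6}

lemma adj_star (t : ℕ) (r : Fin 2) (i : Fin t) : (pathJoin2 t).Adj (Sum.inr r) (Sum.inl i) := by
  simp [pathJoin2]

lemma adj_vtx (t k : ℕ) (ht : 0 < t) (hk : k + 1 < t) :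
    (pathJoin2 t).Adj (Sum.inl (natFin t ht k)) (Sum.inl (natFin t ht (k+1))) := by
  have h1 : k % t = k := Nat.mod_eq_of_lt (by omega)
  have h2 : (k+1) % t = k+1 := Nat.mod_eq_of_lt hk
  simp [pathJoin2, natFin, Fin.ext_iff, h1, h2]

lemma induce_connected_of_star {V : Type*} (G : SimpleGraph V) (S : Set V) (u : V)
    (hu : u ∈ S) (h : ∀ v ∈ S, v ≠ u → G.Adj u v) : (G.induce S).Connected := by
  rw [SimpleGraph.connected_iff]
  have key : ∀ x : S, (G.induce S).Reachable ⟨u, hu⟩ x := by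
    rintro ⟨x, hx⟩
    by_cases hxu : x = u
    · subst hxu; exact SimpleGraph.Reachable.refl _
    · exact SimpleGraph.Adj.reachable (by exact h x hx hxu)
  exact ⟨fun x y => (key x).symm.trans (key y), ⟨⟨u, hu⟩⟩⟩

lemma induce_connected_chain {V : Type*} (G : SimpleGraph V) (f : ℕ → V) (a n : ℕ) (hn : 0 < n)
    (hadj : ∀ k, a ≤ k → k + 1 < a + n → G.Adj (f k) (f (k+1))) :
    (G.induce (f '' Set.Ico a (a+n))).Connected := by
  rw [SimpleGraph.connected_iff]
  have ha : f a ∈ f '' Set.Ico a (a+n) := ⟨a, ⟨le_refl a, by omega⟩, rfl⟩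
  have key : ∀ m (hm1 : a ≤ m) (hm2 : m < a + n),
      (G.induce (f '' Set.Ico a (a+n))).Reachable ⟨f a, ha⟩ ⟨f m, ⟨m, ⟨hm1, hm2⟩, rfl⟩⟩ := by
    intro m hm
    induction m, hm using Nat.le_induction with
    | base => intro _; exact SimpleGraph.Reachable.refl _
    | succ m hm ih =>
      intro hlt
      refine (ih (by omega)).trans (SimpleGraph.Adj.reachable ?_)
      exact hadj m hm hlt
  constructor
  · rintro ⟨x, mx, hmx, rfl⟩ ⟨y, my, hmy, rfl⟩
    exact (key mx hmx.1 hmx.2).symm.trans (key my hmy.1 hmy.2)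
  · exact ⟨⟨f a, ha⟩⟩

/-- For `t = 9(2γ-1)(γ+1)`, the graph `P''_t` is not 3-choosable with clustering at most `γ`:
there is an assignment of lists of size 3 such that every coloring from the lists has a
connected monochromatic subgraph with more than `γ` vertices. -/
theorem stmt2 (γ : ℕ) (hγ : 0 < γ) (t : ℕ) (ht : t = 9 * ((2 * γ - 1) * (γ + 1))) :
    ∃ L : (Fin t ⊕ Fin 2) → Finset ℕ, (∀ v, (L v).card = 3) ∧
      ∀ φ : (Fin t ⊕ Fin 2) → ℕ, (∀ v, φ v ∈ L v) →
        ∃ S : Set (Fin t ⊕ Fin 2), (∀ u ∈ S, ∀ v ∈ S, φ u = φ v) ∧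
          ((pathJoin2 t).induce S).Connected ∧ γ < S.ncard := by
  set M : ℕ := (2 * γ - 1) * (γ + 1) with hMdef
  have hM2 : γ + 1 ≤ M := by
    have : 1 * (γ + 1) ≤ (2 * γ - 1) * (γ + 1) := Nat.mul_le_mul_right _ (by omega)
    omega
  have ht0 : 0 < t := by
    have : 1 * M ≤ 9 * M := Nat.mul_le_mul_right _ (by omega)
    omega
  refine ⟨Lfun t M, ?_, ?_⟩
  · rintro (k | r)
    · have hk9 : (k : ℕ) / M ≤ 8 := by
        have h1 : (k : ℕ) < 9 * M := by omega
        have := (Nat.div_lt_iff_lt_mul (by omega : 0 < M)).2 (by omega : (k:ℕ) < 9 * M)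
        omega
      simp only [Lfun]
      rw [Finset.card_insert_of_notMem (by simp; omega),
        Finset.card_insert_of_notMem (by simp; omega), Finset.card_singleton]
    · simp only [Lfun]; split <;> decide
  · intro φ hφ
    set c0 := φ (Sum.inr 0) with hc0def
    set c1 := φ (Sum.inr 1) with hc1def
    have hc0 : c0 = 1 ∨ c0 = 2 ∨ c0 = 3 := by
      have := hφ (Sum.inr 0); simp [Lfun] at this; tauto
    have hc1 : c1 = 4 ∨ c1 = 5 ∨ c1 = 6 := by
      have := hφ (Sum.inr 1); simp [Lfun] at this; tauto
    set b : ℕ := 3 * (c0 - 1) + (c1 - 4) with hbdef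
    set a₀ : ℕ := b * M with ha0def
    have hb8 : b ≤ 8 := by omega
    have haM : a₀ + M ≤ t := by
      have : (b + 1) * M ≤ 9 * M := Nat.mul_le_mul_right _ (by omega)
      have e : (b + 1) * M = b * M + M := by ring
      omega
    -- every path vertex in the block has list {c0, c1, 7}
    have hblock : ∀ k, a₀ ≤ k → k < a₀ + M →
        φ (Sum.inl (natFin t ht0 k)) = c0 ∨ φ (Sum.inl (natFin t ht0 k)) = c1 ∨
          φ (Sum.inl (natFin t ht0 k)) = 7 := by
      intro k h1 h2
      have hkt : k < t := by omega
      have hval : ((natFin t ht0 k : Fin t) : ℕ) = k := Nat.mod_eq_of_lt hkt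
      have hdiv : k / M = b := by
        refine Nat.div_eq_of_lt_le (by omega) ?_
        have e : (b + 1) * M = b * M + M := by ring
        omega
      have := hφ (Sum.inl (natFin t ht0 k))
      simp only [Lfun, hval, hdiv, Finset.mem_insert, Finset.mem_singleton] at this
      have e1 : b / 3 + 1 = c0 := by omega
      have e2 : b % 3 + 4 = c1 := by omega
      omega
    set vtx : ℕ → (Fin t ⊕ Fin 2) := fun k => Sum.inl (natFin t ht0 k) with hvtx
    have hvtx_inj : ∀ k k', k < t → k' < t → vtx k = vtx k' → k = k' := by
      intro k k' hk hk' h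
      simp only [hvtx, natFin, Sum.inl.injEq, Fin.mk.injEq] at h
      rwa [Nat.mod_eq_of_lt hk, Nat.mod_eq_of_lt hk'] at h
    set A0 : Finset ℕ := (Finset.Ico a₀ (a₀ + M)).filter (fun k => φ (vtx k) = c0) with hA0
    set A1 : Finset ℕ := (Finset.Ico a₀ (a₀ + M)).filter (fun k => φ (vtx k) = c1) with hA1
    by_cases h0 : γ ≤ A0.card
    · -- star at inr 0 with color c0
      refine ⟨↑(insert (Sum.inr 0 : Fin t ⊕ Fin 2) (A0.image vtx)), ?_, ?_, ?_⟩
      · have hmem : ∀ v ∈ insert (Sum.inr 0 : Fin t ⊕ Fin 2) (A0.image vtx), φ v = c0 := by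
          intro v hv
          rcases Finset.mem_insert.1 hv with rfl | hv
          · rfl
          · obtain ⟨k, hk, rfl⟩ := Finset.mem_image.1 hv
            exact (Finset.mem_filter.1 hk).2
        intro u hu v hv
        rw [hmem u hu, hmem v hv]
      · refine induce_connected_of_star _ _ (Sum.inr 0) (by simp) ?_
        intro v hv hne
        simp only [Finset.coe_insert, Set.mem_insert_iff, Finset.coe_image, Set.mem_image,
          Finset.mem_coe] at hv
        rcases hv with rfl | ⟨k, hk, rfl⟩
        · exact absurd rfl hne
        · exact adj_star t 0 _
      · rw [Set.ncard_coe_finset, Finset.card_insert_of_notMem (by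
            intro hmem
            obtain ⟨k, -, hk⟩ := Finset.mem_image.1 hmem
            exact Sum.inl_ne_inr hk),
          Finset.card_image_of_injOn]
        · omega
        · intro k hk k' hk' h
          simp only [hA0, Finset.coe_filter, Set.mem_setOf_eq, Finset.mem_Ico] at hk hk'
          exact hvtx_inj k k' (by omega) (by omega) h
    · by_cases h1 : γ ≤ A1.card
      · -- star at inr 1 with color c1
        refine ⟨↑(insert (Sum.inr 1 : Fin t ⊕ Fin 2) (A1.image vtx)), ?_, ?_, ?_⟩
        · have hmem : ∀ v ∈ insert (Sum.inr 1 : Fin t ⊕ Fin 2) (A1.image vtx), φ v = c1 := by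
            intro v hv
            rcases Finset.mem_insert.1 hv with rfl | hv
            · rfl
            · obtain ⟨k, hk, rfl⟩ := Finset.mem_image.1 hv
              exact (Finset.mem_filter.1 hk).2
          intro u hu v hv
          rw [hmem u hu, hmem v hv]
        · refine induce_connected_of_star _ _ (Sum.inr 1) (by simp) ?_
          intro v hv hne
          simp only [Finset.coe_insert, Set.mem_insert_iff, Finset.coe_image, Set.mem_image,
            Finset.mem_coe] at hv
          rcases hv with rfl | ⟨k, hk, rfl⟩
          · exact absurd rfl hne
          · exact adj_star t 1 _
        · rw [Set.ncard_coe_finset, Finset.card_insert_of_notMem (by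
              intro hmem
              obtain ⟨k, -, hk⟩ := Finset.mem_image.1 hmem
              exact Sum.inl_ne_inr hk),
            Finset.card_image_of_injOn]
          · omega
          · intro k hk k' hk' h
            simp only [hA1, Finset.coe_filter, Set.mem_setOf_eq, Finset.mem_Ico] at hk hk'
            exact hvtx_inj k k' (by omega) (by omega) h
      · -- pigeonhole: some segment of length γ+1 is entirely colored 7
        have hseg : ∃ s, s < 2 * γ - 1 ∧ ∀ k, a₀ + s * (γ + 1) ≤ k →
            k < a₀ + s * (γ + 1) + (γ + 1) → φ (vtx k) = 7 := by
          by_contra hcon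
          push_neg at hcon
          set N : Finset ℕ := (Finset.Ico a₀ (a₀ + M)).filter (fun k => φ (vtx k) ≠ 7) with hN
          have hNsub : N ⊆ A0 ∪ A1 := by
            intro k hk
            obtain ⟨hk1, hk2⟩ := Finset.mem_filter.1 hk
            obtain ⟨h1, h2⟩ := Finset.mem_Ico.1 hk1
            rcases hblock k h1 h2 with h | h | h
            · exact Finset.mem_union_left _ (Finset.mem_filter.2 ⟨hk1, h⟩)
            · exact Finset.mem_union_right _ (Finset.mem_filter.2 ⟨hk1, h⟩)
            · exact absurd h hk2
          have hNcard : N.card ≤ 2 * γ - 2 := by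
            have := Finset.card_le_card hNsub
            have := Finset.card_union_le A0 A1
            omega
          have hwit : ∀ s, s < 2 * γ - 1 → ∃ k, a₀ + s * (γ + 1) ≤ k ∧
              k < a₀ + s * (γ + 1) + (γ + 1) ∧ φ (vtx k) ≠ 7 := by
            intro s hs
            obtain ⟨k, hk1, hk2, hk3⟩ := hcon s hs
            exact ⟨k, hk1, hk2, hk3⟩
          set f : ℕ → ℕ := fun s => if hs : s < 2 * γ - 1 then (hwit s hs).choose else 0 with hf
          have hfs : ∀ s (hs : s < 2 * γ - 1), a₀ + s * (γ + 1) ≤ f s ∧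
              f s < a₀ + s * (γ + 1) + (γ + 1) ∧ φ (vtx (f s)) ≠ 7 := by
            intro s hs
            simp only [hf, dif_pos hs]
            exact (hwit s hs).choose_spec
          have hinN : ∀ s ∈ Finset.range (2 * γ - 1), f s ∈ N := by
            intro s hs
            rw [Finset.mem_range] at hs
            obtain ⟨hl, hr, h7⟩ := hfs s hs
            have hmul : (s + 1) * (γ + 1) ≤ M := by
              rw [hMdef]; exact Nat.mul_le_mul_right _ (by omega)
            have e : (s + 1) * (γ + 1) = s * (γ + 1) + (γ + 1) := by ring
            refine Finset.mem_filter.2 ⟨Finset.mem_Ico.2 ⟨by omega, by omega⟩, h7⟩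
          have hinj : Set.InjOn f ↑(Finset.range (2 * γ - 1)) := by
            intro s1 hs1 s2 hs2 h
            simp only [Finset.coe_range, Set.mem_Iio] at hs1 hs2
            obtain ⟨hl1, hr1, -⟩ := hfs s1 hs1
            obtain ⟨hl2, hr2, -⟩ := hfs s2 hs2
            have d1 : (f s1 - a₀) / (γ + 1) = s1 := by
              refine Nat.div_eq_of_lt_le (by omega) ?_
              have e : (s1 + 1) * (γ + 1) = s1 * (γ + 1) + (γ + 1) := by ring
              omega
            have d2 : (f s2 - a₀) / (γ + 1) = s2 := by
              refine Nat.div_eq_of_lt_le (by omega) ?_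
              have e : (s2 + 1) * (γ + 1) = s2 * (γ + 1) + (γ + 1) := by ring
              omega
            rw [← d1, ← d2, h]
          have := Finset.card_le_card_of_injOn f hinN hinj
          rw [Finset.card_range] at this
          omega
        obtain ⟨s, hs, hall⟩ := hseg
        have hendM : s * (γ + 1) + (γ + 1) ≤ M := by
          have : (s + 1) * (γ + 1) ≤ M := by
            rw [hMdef]; exact Nat.mul_le_mul_right _ (by omega)
          have e : (s + 1) * (γ + 1) = s * (γ + 1) + (γ + 1) := by ring
          omega
        refine ⟨vtx '' Set.Ico (a₀ + s * (γ + 1)) (a₀ + s * (γ + 1) + (γ + 1)), ?_, ?_, ?_⟩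
        · rintro u ⟨k, hk, rfl⟩ v ⟨k', hk', rfl⟩
          rw [hall k hk.1 hk.2, hall k' hk'.1 hk'.2]
        · have e : a₀ + s * (γ + 1) + (γ + 1) = (a₀ + s * (γ + 1)) + (γ + 1) := rfl
          rw [e]
          refine induce_connected_chain _ _ _ _ (by omega) ?_
          intro k hk1 hk2
          exact adj_vtx t k ht0 (by omega)
        · rw [Set.ncard_image_of_injOn]
          · rw [← Finset.coe_Ico, Set.ncard_coe_finset, Nat.card_Ico]
            omega
          · intro k hk k' hk' h
            simp only [Set.mem_Ico] at hk hk'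
            exact hvtx_inj k k' (by omega) (by omega) h
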